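/- For the rotational tournament T on 2k'+1 vertices (arcs v_i → v_{i+j} mod 2k'+1 for j = 1,…,k'), every safe set of T has cardinality at least k'+1. -/

import Mathlib

variable {V : Type*}

/-- Reachability inside a vertex subset `S` of the digraph with arc relation `A`. -/
def ReachIn (A : V → V → Prop) (S : Set V) : V → V → Prop :=
  Relation.ReflTransGen (fun u v => u ∈ S ∧ v ∈ S ∧ A u v)

/-- The sub-digraph induced on `S` is strongly connected. -/
def StrongIn (A : V → V → Prop) (S : Set V) : Prop :=
  ∀ u ∈ S, ∀ v ∈ S, ReachIn A S u v

/-- `M` is a strongly connected component of the sub-digraph induced on `S`. -/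
def IsSCCIn (A : V → V → Prop) (S M : Set V) : Prop :=
  ∃ v ∈ S, M = {u | u ∈ S ∧ ReachIn A S u v ∧ ReachIn A S v u}

/-- There is an arc from (some vertex of) `M` to (some vertex of) `N`. -/
def HasArc (A : V → V → Prop) (M N : Set V) : Prop :=
  ∃ u ∈ M, ∃ w ∈ N, A u w

/-- `S` is a safe set of the sub-digraph of `A` induced on `H`. -/
def SafeSetIn (A : V → V → Prop) (H S : Set V) : Prop :=
  S.Nonempty ∧ S ⊆ H ∧
    (∀ M, IsSCCIn A (H \ S) M → ∃ N, IsSCCIn A S N ∧ HasArc A M N) ∧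
    (∀ M N, IsSCCIn A (H \ S) M → IsSCCIn A S N → HasArc A M N → M.ncard ≤ N.ncard)

/-- `S` is a safe set of the digraph with arc relation `A`. -/
def SafeSet (A : V → V → Prop) (S : Set V) : Prop :=
  SafeSetIn A Set.univ S

/-- `S` is a strong safe set: a safe set inducing a strongly connected sub-digraph. -/
def StrongSafeSet (A : V → V → Prop) (S : Set V) : Prop :=
  SafeSet A S ∧ StrongIn A S

/-- A digraph is `k`-strong if it has at least `k+1` vertices and deleting any
fewer than `k` vertices leaves a strongly connected digraph. -/
def KStrong [Fintype V] (A : V → V → Prop) (k : ℕ) : Prop :=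
  k + 1 ≤ Fintype.card V ∧ ∀ X : Set V, X.ncard < k → StrongIn A Xᶜ

/-- An oriented graph: no loops and no 2-cycles. -/
def Oriented (A : V → V → Prop) : Prop :=
  ∀ u v, A u v → ¬ A v u

/-- A tournament: no loops, and exactly one arc between any two distinct vertices. -/
def IsTournament (A : V → V → Prop) : Prop :=
  (∀ v, ¬ A v v) ∧ ∀ u v : V, u ≠ v → (A u v ↔ ¬ A v u)

/-- An acyclic digraph: no arc lies on a directed cycle. -/
def AcyclicDigraph (A : V → V → Prop) : Prop :=
  ∀ u v, A u v → ¬ ReachIn A Set.univ v u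

/-- `S` is in-dominating: every vertex outside `S` has an out-neighbour in `S`. -/
def InDominating (A : V → V → Prop) (S : Set V) : Prop :=
  ∀ v, v ∉ S → ∃ w ∈ S, A v w

/-- An independent set of a digraph: no arc between any two of its vertices. -/
def IndepSet (A : V → V → Prop) (I : Set V) : Prop :=
  ∀ u ∈ I, ∀ v ∈ I, u ≠ v → ¬ A u v

noncomputable def outDeg (A : V → V → Prop) (v : V) : ℕ := {w | A v w}.ncard
noncomputable def inDeg (A : V → V → Prop) (v : V) : ℕ := {w | A w v}.ncard

/-- The safe number: minimum cardinality of a safe set. -/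
noncomputable def safeNum (A : V → V → Prop) : ℕ :=
  sInf {n | ∃ S : Set V, SafeSet A S ∧ S.ncard = n}

/-- The strong safe number: minimum cardinality of a strong safe set. -/
noncomputable def strongSafeNum (A : V → V → Prop) : ℕ :=
  sInf {n | ∃ S : Set V, StrongSafeSet A S ∧ S.ncard = n}

/-- The sub-digraph induced on `S` is acyclic. -/
def AcyclicIn (A : V → V → Prop) (S : Set V) : Prop :=
  ∀ u ∈ S, ∀ v ∈ S, A u v → ¬ ReachIn A S v u


open Fin.NatCast Fin.CommRing

abbrev Ar (k : ℕ) : Fin (2*k+1) → Fin (2*k+1) → Prop :=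
  fun i j => ∃ t : ℕ, 1 ≤ t ∧ t ≤ k ∧ j.val = (i.val + t) % (2 * k + 1)

lemma val_add_nat (k : ℕ) (i : Fin (2*k+1)) (t : ℕ) :
    (i + (t : Fin (2*k+1))).val = (i.val + t) % (2*k+1) := by
  rw [Fin.add_def, Fin.val_natCast]
  exact Nat.add_mod_mod _ _ _

lemma fin_sub_val_of_le (k : ℕ) (a b : Fin (2*k+1)) (h : b.val ≤ a.val) :
    (a - b).val = a.val - b.val := by
  rw [Fin.sub_def]
  simp only []
  have hb := b.isLt
  have ha := a.isLt
  have : 2*k+1 - b.val + a.val = (a.val - b.val) + (2*k+1) := by omega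
  rw [this, Nat.add_mod_right, Nat.mod_eq_of_lt (by omega)]

lemma arc_iff (k : ℕ) (i j : Fin (2*k+1)) :
    Ar k i j ↔ ∃ t : ℕ, 1 ≤ t ∧ t ≤ k ∧ j = i + (t : Fin (2*k+1)) := by
  constructor
  · rintro ⟨t, h1, h2, h3⟩
    exact ⟨t, h1, h2, Fin.ext (by rw [val_add_nat]; exact h3)⟩
  · rintro ⟨t, h1, h2, rfl⟩
    exact ⟨t, h1, h2, val_add_nat k i t⟩

lemma ncard_lt_set (k : ℕ) (c : Fin (2*k+1)) :
    {v : Fin (2*k+1) | (v - c).val < k}.ncard = k := by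
  have h1 : {v : Fin (2*k+1) | (v - c).val < k}
      = (fun x => x + c) '' {x : Fin (2*k+1) | x.val < k} := by
    ext v
    simp only [Set.mem_setOf_eq, Set.mem_image]
    constructor
    · intro h; exact ⟨v - c, h, by ring⟩
    · rintro ⟨x, hx, rfl⟩; simpa using hx
  rw [h1, Set.ncard_image_of_injective _ (add_left_injective c)]
  have h2 : {x : Fin (2*k+1) | x.val < k} = ↑(Finset.Iio (⟨k, by omega⟩ : Fin (2*k+1))) := by
    ext x
    simp [Fin.lt_def]
  rw [h2, Set.ncard_coe_finset, Fin.card_Iio]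

lemma reachB (k : ℕ) (S : Set (Fin (2*k+1)))
    (hA : ∀ a : Fin (2*k+1), ∃ t : ℕ, 1 ≤ t ∧ t ≤ k ∧ a + (t : Fin (2*k+1)) ∉ S) :
    ∀ d : ℕ, ∀ u v : Fin (2*k+1), u ∉ S → v ∉ S → (v - u).val = d →
      ReachIn (Ar k) (Set.univ \ S) u v := by
  intro d
  induction d using Nat.strong_induction_on with
  | _ d ih =>
    intro u v hu hv hd
    rcases Nat.eq_zero_or_pos d with h0 | hpos
    · have h1 : v - u = 0 := Fin.ext (by rw [hd, h0]; rfl)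
      rw [sub_eq_zero] at h1
      rw [h1]
      exact Relation.ReflTransGen.refl
    · by_cases hdk : d ≤ k
      · have hvu : v - u = ((d : ℕ) : Fin (2*k+1)) := by
          refine Fin.ext ?_
          rw [hd, Fin.val_natCast, Nat.mod_eq_of_lt (by omega)]
        have hveq : v = u + ((d : ℕ) : Fin (2*k+1)) := by rw [← hvu]; ring
        have harc : Ar k u v := (arc_iff k u v).mpr ⟨d, hpos, hdk, hveq⟩
        exact Relation.ReflTransGen.single ⟨⟨Set.mem_univ u, hu⟩, ⟨Set.mem_univ v, hv⟩, harc⟩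
      · obtain ⟨t, ht1, ht2, hnotin⟩ := hA u
        set u' := u + ((t : ℕ) : Fin (2*k+1)) with hu'
        have harc : Ar k u u' := (arc_iff k u u').mpr ⟨t, ht1, ht2, rfl⟩
        have htval : ((t : ℕ) : Fin (2*k+1)).val = t := by
          rw [Fin.val_natCast, Nat.mod_eq_of_lt (by omega)]
        have hsub : v - u' = (v - u) - ((t : ℕ) : Fin (2*k+1)) := by rw [hu']; ring
        have hd' : (v - u').val = d - t := by
          rw [hsub, fin_sub_val_of_le k _ _ (by rw [htval, hd]; omega), htval, hd]
        have hlt : d - t < d := by omega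
        exact Relation.ReflTransGen.head ⟨⟨Set.mem_univ u, hu⟩, ⟨Set.mem_univ u', hnotin⟩, harc⟩
          (ih (d - t) hlt u' v hnotin hv hd')

lemma monoA (k : ℕ) (c : Fin (2*k+1)) (S : Set (Fin (2*k+1)))
    (hSc : ∀ v, v ∈ S ↔ (v - c).val < k) :
    ∀ u v : Fin (2*k+1), ReachIn (Ar k) (Set.univ \ S) u v → (u - c).val ≤ (v - c).val := by
  intro u v h
  induction h with
  | refl => exact le_refl _
  | @tail b w hab step ih =>
    obtain ⟨hbmem, hwmem, harc⟩ := step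
    rw [arc_iff] at harc
    obtain ⟨t, ht1, ht2, rfl⟩ := harc
    have hb : ¬ (b - c).val < k := fun h => hbmem.2 ((hSc b).mpr h)
    have hw : ¬ ((b + ((t : ℕ) : Fin (2*k+1))) - c).val < k := fun h => hwmem.2 ((hSc _).mpr h)
    have hval : ((b + ((t : ℕ) : Fin (2*k+1))) - c).val = ((b - c).val + t) % (2*k+1) := by
      have heq : (b + ((t : ℕ) : Fin (2*k+1))) - c = (b - c) + ((t : ℕ) : Fin (2*k+1)) := by ring
      rw [heq, val_add_nat]
    have hblt := (b - c).isLt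
    by_cases hover : (b - c).val + t < 2*k+1
    · rw [hval, Nat.mod_eq_of_lt hover]
      omega
    · exfalso
      apply hw
      rw [hval]
      have heq2 : (b - c).val + t = ((b - c).val + t - (2*k+1)) + (2*k+1) := by omega
      rw [heq2, Nat.add_mod_right, Nat.mod_eq_of_lt (by omega)]
      omega

theorem stmt14 (k : ℕ) :
    let A : Fin (2 * k + 1) → Fin (2 * k + 1) → Prop := fun i j =>
      ∃ t : ℕ, 1 ≤ t ∧ t ≤ k ∧ j.val = (i.val + t) % (2 * k + 1)
    ∀ S : Set (Fin (2 * k + 1)), SafeSet A S → k + 1 ≤ S.ncard := by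
  intro A S hS
  by_contra hcon
  push_neg at hcon
  have hcard : S.ncard ≤ k := by omega
  unfold SafeSet SafeSetIn at hS
  obtain ⟨hne, -, hcond1, hcond2⟩ := hS
  rcases Nat.eq_zero_or_pos k with hk0 | hk
  · have hpos := (Set.ncard_pos S.toFinite).mpr hne
    omega
  have hSne_univ : S ≠ Set.univ := by
    intro h
    rw [h, Set.ncard_univ, Nat.card_eq_fintype_card, Fintype.card_fin] at hcard
    omega
  obtain ⟨m0, hm0⟩ : ∃ m, m ∉ S := by
    by_contra h; push_neg at h; exact hSne_univ (Set.eq_univ_of_forall h)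
  by_cases hCA : ∃ a : Fin (2*k+1), ∀ t : ℕ, 1 ≤ t → t ≤ k → a + ((t:ℕ) : Fin (2*k+1)) ∈ S
  · -- Case A : S is a cyclic interval of length k
    obtain ⟨a, ha⟩ := hCA
    set c := a + 1 with hc
    have hIsub : {v : Fin (2*k+1) | (v - c).val < k} ⊆ S := by
      intro v hv
      simp only [Set.mem_setOf_eq] at hv
      have hvc : v - c = (((v - c).val : ℕ) : Fin (2*k+1)) := by
        refine Fin.ext ?_
        rw [Fin.val_natCast, Nat.mod_eq_of_lt (by omega)]
      have hveq : v = a + ((((v - c).val + 1 : ℕ)) : Fin (2*k+1)) := by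
        push_cast
        rw [hc]
        ring
      rw [hveq]
      exact ha _ (by omega) (by omega)
    have hSeq : S = {v | (v - c).val < k} :=
      (Set.eq_of_subset_of_ncard_le hIsub
        (by rw [ncard_lt_set]; exact hcard) S.toFinite).symm
    have hSc : ∀ v, v ∈ S ↔ (v - c).val < k := fun v => by rw [hSeq]; exact Iff.rfl
    set m := a + (((k+1 : ℕ)) : Fin (2*k+1)) with hm
    have hmc : (m - c).val = k := by
      have heq : m - c = ((k : ℕ) : Fin (2*k+1)) := by
        rw [hm, hc]; push_cast; ring
      rw [heq, Fin.val_natCast, Nat.mod_eq_of_lt (by omega)]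
    have hmS : m ∉ S := fun h => by rw [hSc m] at h; omega
    obtain ⟨N, hN, harc⟩ := hcond1
      {u | u ∈ (Set.univ \ S) ∧ ReachIn A (Set.univ \ S) u m ∧ ReachIn A (Set.univ \ S) m u}
      ⟨m, ⟨Set.mem_univ m, hmS⟩, rfl⟩
    obtain ⟨u, huM, w, hwN, harcw⟩ := harc
    obtain ⟨huH, hum, hmu⟩ := huM
    have h1 : (u - c).val ≤ k := by
      have := monoA k c S hSc u m hum
      omega
    have h2 : (u - c).val = k := by
      have hge : ¬ (u - c).val < k := fun hh => huH.2 ((hSc u).mpr hh)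
      omega
    have hueq : u = m := by
      have heq : u - c = m - c := Fin.ext (by rw [h2, hmc])
      exact sub_left_inj.mp heq
    subst hueq
    obtain ⟨t, ht1, ht2, rfl⟩ := (arc_iff k _ w).mp harcw
    have hwc : ((m + ((t:ℕ) : Fin (2*k+1))) - c).val = k + t := by
      have heq : (m + ((t:ℕ):Fin (2*k+1))) - c = (m - c) + ((t:ℕ):Fin (2*k+1)) := by ring
      rw [heq, val_add_nat, hmc, Nat.mod_eq_of_lt (by omega)]
    have hwS : m + ((t:ℕ) : Fin (2*k+1)) ∈ S := by
      obtain ⟨w0, hw0, hNeq⟩ := hN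
      rw [hNeq] at hwN
      exact hwN.1
    rw [hSc] at hwS
    omega
  · -- Case B : the complement of S is strongly connected
    push_neg at hCA
    have hreach : ∀ u v : Fin (2*k+1), u ∉ S → v ∉ S → ReachIn A (Set.univ \ S) u v :=
      fun u v hu hv => reachB k S hCA (v - u).val u v hu hv rfl
    set M := {u | u ∈ (Set.univ \ S) ∧ ReachIn A (Set.univ \ S) u m0 ∧
      ReachIn A (Set.univ \ S) m0 u} with hM
    have hMscc : IsSCCIn A (Set.univ \ S) M := ⟨m0, ⟨Set.mem_univ _, hm0⟩, rfl⟩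
    obtain ⟨N, hN, harc⟩ := hcond1 M hMscc
    have hle := hcond2 M N hMscc hN harc
    have hMeq : M = Set.univ \ S := by
      ext u
      constructor
      · exact fun h => h.1
      · intro h
        exact ⟨h, hreach u m0 h.2 hm0, hreach m0 u hm0 h.2⟩
    have hMcard : M.ncard = 2*k+1 - S.ncard := by
      rw [hMeq, Set.ncard_diff (Set.subset_univ S), Set.ncard_univ,
        Nat.card_eq_fintype_card, Fintype.card_fin]
    have hNsub : N ⊆ S := by
      obtain ⟨w0, hw0, hNeq⟩ := hN
      rw [hNeq]
      exact fun x hx => hx.1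
    have hNcard : N.ncard ≤ S.ncard := Set.ncard_le_ncard hNsub S.toFinite
    omega
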